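/- Let X_1, X_2, ... be i.i.d. Bernoulli(p) with p ≠ α, S_n = Σ_{i≤n} X_i, and define τ = inf{n : (n+1)·b(n,α,S_n) ≤ ε} for ε ∈ (0,1). Then τ < ∞ almost surely. -/

import Mathlib

open MeasureTheory ProbabilityTheory Filter

/-- The binomial probability mass function `b(n,p,x) = C(n,x) p^x (1-p)^(n-x)`. -/
noncomputable def binomPMF (n : ℕ) (p : ℝ) (x : ℕ) : ℝ :=
  (n.choose x : ℝ) * p ^ x * (1 - p) ^ (n - x)

/-- A single binomial term is at most 1. -/
lemma binom_term_le_one (n s : ℕ) (q : ℝ) (h0 : 0 ≤ q) (h1 : q ≤ 1) (hs : s ≤ n) :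
    (n.choose s : ℝ) * q ^ s * (1 - q) ^ (n - s) ≤ 1 := by
  have hsum : ∑ k ∈ Finset.range (n + 1),
      q ^ k * (1 - q) ^ (n - k) * (n.choose k : ℝ) = 1 := by
    rw [← add_pow q (1 - q) n]
    norm_num
  calc (n.choose s : ℝ) * q ^ s * (1 - q) ^ (n - s)
      = q ^ s * (1 - q) ^ (n - s) * (n.choose s : ℝ) := by ring
    _ ≤ ∑ k ∈ Finset.range (n + 1), q ^ k * (1 - q) ^ (n - k) * (n.choose k : ℝ) := by
        apply Finset.single_le_sum (f := fun k => q ^ k * (1 - q) ^ (n - k) * (n.choose k : ℝ))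
        · intro k _
          exact mul_nonneg (mul_nonneg (pow_nonneg h0 _)
            (pow_nonneg (by linarith) _)) (Nat.cast_nonneg _)
        · exact Finset.mem_range.2 (Nat.lt_succ_of_le hs)
    _ = 1 := hsum

/-- Deterministic part: if `s n / n → p` with `p ≠ α`, the stopping condition
eventually holds. -/
lemma det_exists (p α ε : ℝ) (hp : p ∈ Set.Ioo (0:ℝ) 1) (hα : α ∈ Set.Ioo (0:ℝ) 1)
    (hpα : p ≠ α) (hε : 0 < ε) (s : ℕ → ℕ) (hs : ∀ n, s n ≤ n)
    (hlim : Filter.Tendsto (fun n : ℕ => (s n : ℝ) / n) atTop (nhds p)) :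
    ∃ n : ℕ, 1 ≤ n ∧ ((n : ℝ) + 1) * binomPMF n α (s n) ≤ ε := by
  obtain ⟨hp0, hp1⟩ := hp
  obtain ⟨hα0, hα1⟩ := hα
  have hp0' : (0:ℝ) < 1 - p := by linarith
  set A : ℝ := α / p with hA
  set B : ℝ := (1 - α) / (1 - p) with hB
  have hApos : 0 < A := div_pos hα0 hp0
  have hBpos : 0 < B := div_pos (by linarith) hp0'
  have hpne : p ≠ 0 := ne_of_gt hp0
  have hpne' : (1:ℝ) - p ≠ 0 := ne_of_gt hp0'
  have hAB : p * A + (1 - p) * B = 1 := by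
    rw [hA, hB]
    field_simp
    ring
  have hAne : A ≠ 1 := by
    intro h
    rw [hA, div_eq_one_iff_eq hpne] at h
    exact hpα h.symm
  have hBne : B ≠ 1 := by
    intro h
    rw [hB, div_eq_one_iff_eq hpne'] at h
    exact hpα (by linarith)
  have hlogA : Real.log A < A - 1 := Real.log_lt_sub_one_of_pos hApos hAne
  have hlogB : Real.log B < B - 1 := Real.log_lt_sub_one_of_pos hBpos hBne
  set c : ℝ := -(p * Real.log A + (1 - p) * Real.log B) with hc
  have hcpos : 0 < c := by
    have h1 : p * Real.log A < p * (A - 1) := by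
      exact mul_lt_mul_of_pos_left hlogA hp0
    have h2 : (1 - p) * Real.log B < (1 - p) * (B - 1) :=
      mul_lt_mul_of_pos_left hlogB hp0'
    have : p * Real.log A + (1 - p) * Real.log B < 0 := by nlinarith
    linarith
  -- the exponent rate tends to -c < -c/2
  have htend : Filter.Tendsto
      (fun n : ℕ => ((s n : ℝ) / n) * Real.log A + (1 - (s n : ℝ) / n) * Real.log B)
      atTop (nhds (-c)) := by
    have : (-c) = p * Real.log A + (1 - p) * Real.log B := by rw [hc]; ring
    rw [this]
    exact (hlim.mul tendsto_const_nhds).add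
      (((tendsto_const_nhds.sub hlim).mul tendsto_const_nhds))
  have hev1 : ∀ᶠ n : ℕ in atTop,
      ((s n : ℝ) / n) * Real.log A + (1 - (s n : ℝ) / n) * Real.log B < -c / 2 :=
    htend.eventually_lt_const (by linarith)
  -- (n+1) * exp(-(c/2) n) → 0
  have htend2 : Filter.Tendsto (fun n : ℕ => ((n : ℝ) + 1) * Real.exp (-(c / 2) * n))
      atTop (nhds 0) := by
    have hcomp : Filter.Tendsto (fun n : ℕ => (c / 2) * (n:ℝ)) atTop atTop :=
      (tendsto_natCast_atTop_atTop).const_mul_atTop (half_pos hcpos)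
    have hg : Filter.Tendsto (fun x : ℝ => ((2 / c) * x + 1) * Real.exp (-x))
        atTop (nhds 0) := by
      have h1 : Filter.Tendsto (fun x : ℝ => x * Real.exp (-x)) atTop (nhds 0) := by
        simpa using Real.tendsto_pow_mul_exp_neg_atTop_nhds_zero 1
      have h2 : Filter.Tendsto (fun x : ℝ => Real.exp (-x)) atTop (nhds 0) :=
        Real.tendsto_exp_neg_atTop_nhds_zero
      have := ((h1.const_mul (2 / c)).add h2)
      simpa [add_mul, mul_assoc] using this
    have := hg.comp hcomp
    refine this.congr fun n => ?_
    have hc0 : c ≠ 0 := ne_of_gt hcpos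
    simp only [Function.comp]
    rw [neg_mul]
    congr 1
    field_simp
  have hev2 : ∀ᶠ n : ℕ in atTop, ((n : ℝ) + 1) * Real.exp (-(c / 2) * n) < ε :=
    htend2.eventually_lt_const hε
  obtain ⟨n, ⟨hev1n, hev2n⟩, hn1⟩ := ((hev1.and hev2).and (eventually_ge_atTop 1)).exists
  refine ⟨n, hn1, ?_⟩
  have hn0 : (0:ℝ) < n := by exact_mod_cast hn1
  have hsn := hs n
  -- bound binomPMF
  have hkey : binomPMF n α (s n) ≤ A ^ (s n) * B ^ (n - s n) := by
    have hαA : α = p * A := by rw [hA]; field_simp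
    have hαB : (1 - α) = (1 - p) * B := by rw [hB]; field_simp
    have : binomPMF n α (s n)
        = ((n.choose (s n) : ℝ) * p ^ (s n) * (1 - p) ^ (n - s n))
          * (A ^ (s n) * B ^ (n - s n)) := by
      unfold binomPMF
      rw [hαB, hαA, mul_pow, mul_pow]
      ring
    rw [this]
    have h1 : (n.choose (s n) : ℝ) * p ^ (s n) * (1 - p) ^ (n - s n) ≤ 1 :=
      binom_term_le_one n (s n) p (le_of_lt hp0) (le_of_lt hp1) hsn
    have h2 : (0:ℝ) ≤ A ^ (s n) * B ^ (n - s n) := by positivity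
    nlinarith [mul_nonneg (mul_nonneg (Nat.cast_nonneg (n.choose (s n)))
      (pow_nonneg (le_of_lt hp0) (s n))) (pow_nonneg (by linarith : (0:ℝ) ≤ 1 - p) (n - s n))]
  -- express A^s B^(n-s) as exp
  have hexp : A ^ (s n) * B ^ (n - s n)
      = Real.exp ((n : ℝ) * (((s n : ℝ) / n) * Real.log A
          + (1 - (s n : ℝ) / n) * Real.log B)) := by
    rw [← Real.exp_log hApos, ← Real.exp_log hBpos, ← Real.exp_nat_mul, ← Real.exp_nat_mul,
      ← Real.exp_add]
    congr 1
    rw [Nat.cast_sub hsn]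
    field_simp
    rw [Real.log_exp, Real.log_exp]
  have hle : A ^ (s n) * B ^ (n - s n) ≤ Real.exp (-(c / 2) * n) := by
    rw [hexp]
    apply Real.exp_le_exp.2
    have : (n : ℝ) * (((s n : ℝ) / n) * Real.log A + (1 - (s n : ℝ) / n) * Real.log B)
        ≤ (n : ℝ) * (-c / 2) := by
      apply mul_le_mul_of_nonneg_left (le_of_lt hev1n) (le_of_lt hn0)
    linarith [this]
  calc ((n : ℝ) + 1) * binomPMF n α (s n)
      ≤ ((n : ℝ) + 1) * Real.exp (-(c / 2) * n) := by
        apply mul_le_mul_of_nonneg_left (hkey.trans hle) (by linarith)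
    _ ≤ ε := le_of_lt hev2n

/-- If `p ≠ α`, the CSM stopping time `τ = inf{n : (n+1) b(n,α,S_n) ≤ ε}` is finite
almost surely: a.s. there exists `n` with `(n+1) b(n,α,S_n) ≤ ε`. -/
theorem stmt7
    (Ω : Type*) [MeasureSpace Ω] [IsProbabilityMeasure (ℙ : Measure Ω)]
    (p α ε : ℝ) (hp : p ∈ Set.Ioo (0:ℝ) 1) (hα : α ∈ Set.Ioo (0:ℝ) 1)
    (hpα : p ≠ α) (hε : ε ∈ Set.Ioo (0:ℝ) 1)
    (X : ℕ → Ω → ℕ)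
    (hmeas : ∀ i, Measurable (X i))
    (hindep : iIndepFun X ℙ)
    (hval : ∀ i ω, X i ω ≤ 1)
    (hdist : ∀ i, ℙ {ω | X i ω = 1} = ENNReal.ofReal p) :
    ℙ {ω | ∃ n : ℕ, 1 ≤ n ∧
        ((n : ℝ) + 1) * binomPMF n α (∑ i ∈ Finset.range n, X i ω) ≤ ε} = 1 := by
  -- values are 0 or 1
  have hval01 : ∀ i ω, X i ω = 0 ∨ X i ω = 1 := fun i ω =>
    Nat.le_one_iff_eq_zero_or_eq_one.1 (hval i ω)
  -- measure of {X i = 0}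
  have hcompl : ∀ i, {ω | X i ω = 0} = {ω | X i ω = 1}ᶜ := by
    intro i
    ext ω
    simp only [Set.mem_setOf_eq, Set.mem_compl_iff]
    rcases hval01 i ω with h | h <;> simp [h]
  have hmeas1 : ∀ i, MeasurableSet {ω | X i ω = 1} := fun i =>
    (hmeas i) (measurableSet_singleton 1)
  have hdist0 : ∀ i, ℙ {ω | X i ω = 0} = 1 - ENNReal.ofReal p := by
    intro i
    rw [hcompl i, measure_compl (hmeas1 i) (measure_ne_top _ _), hdist i, measure_univ]
  -- identical distribution of X i
  classical
  have hpre : ∀ i (s : Set ℕ), X i ⁻¹' s =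
      (if (1:ℕ) ∈ s then {ω | X i ω = 1} else ∅) ∪
        (if (0:ℕ) ∈ s then {ω | X i ω = 0} else ∅) := by
    intro i s
    ext ω
    rcases hval01 i ω with h | h <;>
      · by_cases h1 : (1:ℕ) ∈ s <;> by_cases h0 : (0:ℕ) ∈ s <;>
          simp [Set.mem_preimage, Set.mem_union, h, h1, h0]
  have hdisj : ∀ i, Disjoint {ω | X i ω = 1} {ω | X i ω = 0} := by
    intro i
    rw [Set.disjoint_left]
    intro ω hω hω'
    simp only [Set.mem_setOf_eq] at hω hω'
    omega
  have hkey : ∀ i (s : Set ℕ), ℙ (X i ⁻¹' s) =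
      (if (1:ℕ) ∈ s then ENNReal.ofReal p else 0)
        + (if (0:ℕ) ∈ s then 1 - ENNReal.ofReal p else 0) := by
    intro i s
    rw [hpre i s]
    by_cases h1 : (1:ℕ) ∈ s <;> by_cases h0 : (0:ℕ) ∈ s <;>
      simp only [h1, h0, if_true, if_false, Set.union_empty, Set.empty_union]
    · rw [measure_union (hdisj i) ((hmeas i) (measurableSet_singleton 0)),
        hdist i, hdist0 i]
    · rw [hdist i, add_zero]
    · rw [hdist0 i, zero_add]
    · simp
  have hmap : ∀ i, Measure.map (X i) ℙ = Measure.map (X 0) ℙ := by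
    intro i
    ext s hsm
    rw [Measure.map_apply (hmeas i) hsm, Measure.map_apply (hmeas 0) hsm,
      hkey i s, hkey 0 s]
  -- real-valued versions
  set Y : ℕ → Ω → ℝ := fun i ω => (X i ω : ℝ) with hY
  have hYmeas : ∀ i, Measurable (Y i) := fun i =>
    measurable_from_top.comp (hmeas i)
  have hident : ∀ i, IdentDistrib (Y i) (Y 0) ℙ ℙ := by
    intro i
    have hX : IdentDistrib (X i) (X 0) ℙ ℙ :=
      ⟨(hmeas i).aemeasurable, (hmeas 0).aemeasurable, hmap i⟩
    exact hX.comp measurable_from_top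
  have hindep' : Pairwise (Function.onFun (IndepFun · · ℙ) Y) := by
    intro i j hij
    exact (hindep.indepFun hij).comp measurable_from_top measurable_from_top
  -- Y 0 as an indicator
  have hY0 : Y 0 = Set.indicator {ω | X 0 ω = 1} (fun _ => (1:ℝ)) := by
    funext ω
    rcases hval01 0 ω with h | h <;> simp [hY, h, Set.indicator_apply]
  have hint : Integrable (Y 0) ℙ := by
    rw [hY0]
    exact (integrable_const (1:ℝ)).indicator (hmeas1 0)
  have hexp : (ℙ[Y 0]) = p := by
    rw [hY0, integral_indicator_const (1:ℝ) (hmeas1 0), measureReal_def, hdist 0]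
    simp [ENNReal.toReal_ofReal (le_of_lt hp.1)]
  -- strong law
  have hSLLN := strong_law_ae_real Y hint hindep' hident
  rw [hexp] at hSLLN
  -- a.e. the conclusion holds
  have hae : ∀ᵐ ω ∂(ℙ : Measure Ω), ω ∈ {ω | ∃ n : ℕ, 1 ≤ n ∧
      ((n : ℝ) + 1) * binomPMF n α (∑ i ∈ Finset.range n, X i ω) ≤ ε} := by
    filter_upwards [hSLLN] with ω hω
    have hlim : Filter.Tendsto
        (fun n : ℕ => ((∑ i ∈ Finset.range n, X i ω : ℕ) : ℝ) / n) atTop (nhds p) := by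
      refine hω.congr fun n => ?_
      rw [Nat.cast_sum]
    have hs : ∀ n, (∑ i ∈ Finset.range n, X i ω) ≤ n := by
      intro n
      calc (∑ i ∈ Finset.range n, X i ω) ≤ ∑ i ∈ Finset.range n, 1 :=
        Finset.sum_le_sum fun i _ => hval i ω
      _ = n := by simp
    exact det_exists p α ε hp hα hpα hε.1 (fun n => ∑ i ∈ Finset.range n, X i ω) hs hlim
  have h0 : ℙ ({ω | ∃ n : ℕ, 1 ≤ n ∧
      ((n : ℝ) + 1) * binomPMF n α (∑ i ∈ Finset.range n, X i ω) ≤ ε}ᶜ) = 0 := by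
    have := ae_iff.mp hae
    simpa [Set.compl_setOf] using this
  rw [measure_congr (ae_eq_univ.2 h0), measure_univ]
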